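/- arXiv:1508.07933 — 3 statements merged into one kernel-verified Lean document; each statement's English description precedes it below -/
import Mathlib

section
/- Let f : ℝⁿ → ℝ be differentiable with G-Lipschitz gradient, and let u ∈ ℝⁿ be the vector with coordinates uᵢ = ⟨∇f(xᵢ), eᵢ⟩ for points x₁,…,xₙ ∈ ℝⁿ. Then for any x̄ ∈ ℝⁿ, ‖∇f(x̄) − u‖ ≤ G·Σᵢ₌₁ⁿ ‖x̄ − xᵢ‖. -/
lemma euclid_norm_le_sum_abs {n : ℕ} (v : EuclideanSpace ℝ (Fin n)) :
    ‖v‖ ≤ ∑ i, |v i| := by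
  rw [EuclideanSpace.norm_eq]
  have h := Finset.sum_sq_le_sq_sum_of_nonneg
    (s := Finset.univ) (f := fun i => |v i|) (fun i _ => abs_nonneg _)
  calc Real.sqrt (∑ i, ‖v i‖ ^ 2)
      ≤ Real.sqrt ((∑ i, |v i|) ^ 2) := by
        apply Real.sqrt_le_sqrt
        simpa [Real.norm_eq_abs, sq_abs] using h
    _ = ∑ i, |v i| := Real.sqrt_sq (Finset.sum_nonneg fun i _ => abs_nonneg _)

lemma euclid_abs_coord_le_norm {n : ℕ} (w : EuclideanSpace ℝ (Fin n)) (i : Fin n) :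
    |w i| ≤ ‖w‖ := by
  rw [EuclideanSpace.norm_eq]
  have h1 : |w i| = Real.sqrt (‖w i‖ ^ 2) := by
    rw [Real.norm_eq_abs, sq_abs, Real.sqrt_sq_eq_abs]
  rw [h1]
  apply Real.sqrt_le_sqrt
  exact Finset.single_le_sum (f := fun j => ‖w j‖ ^ 2)
    (fun j _ => sq_nonneg _) (Finset.mem_univ i)

theorem stmt_7 {n : ℕ} (f : EuclideanSpace ℝ (Fin n) → ℝ) (G : ℝ)
    (hdiff : Differentiable ℝ f)
    (hG : ∀ a b, ‖gradient f a - gradient f b‖ ≤ G * ‖a - b‖)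
    (x : Fin n → EuclideanSpace ℝ (Fin n)) (u : EuclideanSpace ℝ (Fin n))
    (hu : ∀ i, u i = gradient f (x i) i)
    (xbar : EuclideanSpace ℝ (Fin n)) :
    ‖gradient f xbar - u‖ ≤ G * ∑ i, ‖xbar - x i‖ := by
  calc ‖gradient f xbar - u‖
      ≤ ∑ i, |(gradient f xbar - u) i| := euclid_norm_le_sum_abs _
    _ ≤ ∑ i, G * ‖xbar - x i‖ := by
        apply Finset.sum_le_sum
        intro i _
        have h1 : (gradient f xbar - u) i
            = (gradient f xbar - gradient f (x i)) i := by
          simp [hu i]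
        rw [h1]
        calc |(gradient f xbar - gradient f (x i)) i|
            ≤ ‖gradient f xbar - gradient f (x i)‖ :=
              euclid_abs_coord_le_norm _ i
          _ ≤ G * ‖xbar - x i‖ := hG _ _
    _ = G * ∑ i, ‖xbar - x i‖ := by rw [Finset.mul_sum]
end

section
/- Suppose a sequence zᵏ(t) ∈ ℝⁿ satisfies zᵏ(t) = (1/rₖ)·Σ_{s=0}^{t-1} M^{t-s-1} uₖ(s) eₖ and z̄ᵏ(t) = Σ_{s=0}^{t-1} uₖ(s), where M is row-stochastic and reversible with respect to a strictly positive probability vector r, |uₖ(s)| ≤ L for all s, and λ ∈ (0,1] is the spectral gap of M. Then for all t ≥ 1, ‖zᵏ(t) − z̄ᵏ(t)·1‖² ≤ L² / (r*³·(1 − √(1−λ))²), where r* = minᵢ rᵢ. -/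
open Finset

/-- L²(r)-contraction of a row-stochastic reversible matrix (Jensen/Cauchy-Schwarz). -/
lemma aux_contract {n : ℕ} (M : Matrix (Fin n) (Fin n) ℝ) (r : Fin n → ℝ)
    (hMnn : ∀ i j, 0 ≤ M i j) (hMrow : ∀ i, ∑ j, M i j = 1)
    (hrev : ∀ i j, r i * M i j = r j * M j i) (hrnn : ∀ i, 0 ≤ r i)
    (f : Fin n → ℝ) :
    ∑ i, r i * (M.mulVec f i) ^ 2 ≤ ∑ i, r i * f i ^ 2 := by
  have key : ∀ i, (M.mulVec f i) ^ 2 ≤ ∑ j, M i j * f j ^ 2 := by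
    intro i
    have h := Finset.sum_mul_sq_le_sq_mul_sq Finset.univ
      (fun j => Real.sqrt (M i j)) (fun j => Real.sqrt (M i j) * f j)
    have h1 : ∀ j, Real.sqrt (M i j) * (Real.sqrt (M i j) * f j) = M i j * f j := by
      intro j
      rw [← mul_assoc, Real.mul_self_sqrt (hMnn i j)]
    have h2 : ∀ j, Real.sqrt (M i j) ^ 2 = M i j := fun j => Real.sq_sqrt (hMnn i j)
    have h3 : ∀ j, (Real.sqrt (M i j) * f j) ^ 2 = M i j * f j ^ 2 := by
      intro j; rw [mul_pow, h2]
    simp only [h1, h2, h3] at h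
    calc (M.mulVec f i) ^ 2 = (∑ j, M i j * f j) ^ 2 := by rfl
      _ ≤ (∑ j, M i j) * ∑ j, M i j * f j ^ 2 := h
      _ = ∑ j, M i j * f j ^ 2 := by rw [hMrow i, one_mul]
  calc ∑ i, r i * (M.mulVec f i) ^ 2
      ≤ ∑ i, r i * ∑ j, M i j * f j ^ 2 := by
        apply Finset.sum_le_sum
        intro i _
        exact mul_le_mul_of_nonneg_left (key i) (hrnn i)
    _ = ∑ j, (∑ i, r i * M i j) * f j ^ 2 := by
        simp_rw [Finset.mul_sum, Finset.sum_mul]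
        rw [Finset.sum_comm]
        apply Finset.sum_congr rfl; intro j _
        apply Finset.sum_congr rfl; intro i _
        ring
    _ = ∑ j, r j * f j ^ 2 := by
        apply Finset.sum_congr rfl; intro j _
        congr 1
        calc ∑ i, r i * M i j = ∑ i, r j * M j i := by
              exact Finset.sum_congr rfl (fun i _ => hrev i j)
          _ = r j := by rw [← Finset.mul_sum, hMrow j, mul_one]

/-- The stationary mean is preserved. -/
lemma aux_mean {n : ℕ} (M : Matrix (Fin n) (Fin n) ℝ) (r : Fin n → ℝ)
    (hMrow : ∀ i, ∑ j, M i j = 1)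
    (hrev : ∀ i j, r i * M i j = r j * M j i)
    (f : Fin n → ℝ) :
    ∑ i, r i * M.mulVec f i = ∑ i, r i * f i := by
  calc ∑ i, r i * M.mulVec f i = ∑ i, ∑ j, r i * M i j * f j := by
        apply Finset.sum_congr rfl; intro i _
        rw [Matrix.mulVec, dotProduct, Finset.mul_sum]
        exact Finset.sum_congr rfl (fun j _ => by ring)
    _ = ∑ j, ∑ i, r j * M j i * f j := by
        rw [Finset.sum_comm]
        exact Finset.sum_congr rfl (fun j _ => Finset.sum_congr rfl
          (fun i _ => by rw [hrev i j]))
    _ = ∑ j, r j * f j := by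
        apply Finset.sum_congr rfl; intro j _
        rw [← Finset.sum_mul, ← Finset.mul_sum, hMrow j, mul_one]

set_option maxHeartbeats 1000000 in
theorem stmt_11 {n : ℕ} (M : Matrix (Fin n) (Fin n) ℝ) (r : Fin n → ℝ)
    (hrpos : ∀ i, 0 < r i) (hrsum : ∑ i, r i = 1)
    (hMnn : ∀ i j, 0 ≤ M i j) (hMrow : ∀ i, ∑ j, M i j = 1)
    (hrev : ∀ i j, r i * M i j = r j * M j i)
    (lam : ℝ)
    (hlam : lam = sInf {c : ℝ | ∃ f : Fin n → ℝ, f ≠ 0 ∧ (∑ i, r i * f i) = 0 ∧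
      c = ((∑ i, r i * (f i) ^ 2) - ∑ i, r i * ((M.mulVec f) i) ^ 2)
            / (∑ i, r i * (f i) ^ 2)})
    (hlampos : 0 < lam) (hlamle : lam ≤ 1)
    (rstar : ℝ) (hrstar : IsLeast (Set.range r) rstar)
    (k : Fin n) (u : ℕ → ℝ) (L : ℝ) (hu : ∀ s, |u s| ≤ L)
    (z : ℕ → Fin n → ℝ) (zbar : ℕ → ℝ)
    (hz : ∀ t i, z t i =
      (1 / r k) * ∑ s ∈ Finset.range t, ((M ^ (t - s - 1)).mulVec (Pi.single k (u s))) i)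
    (hzbar : ∀ t, zbar t = ∑ s ∈ Finset.range t, u s)
    (t : ℕ) (ht : 1 ≤ t) :
    ∑ i, (z t i - zbar t) ^ 2 ≤
      L ^ 2 / (rstar ^ 3 * (1 - Real.sqrt (1 - lam)) ^ 2) := by
  have hrnn : ∀ i, 0 ≤ r i := fun i => (hrpos i).le
  obtain ⟨⟨i₀, hi₀⟩, hrle⟩ := hrstar
  have hrstarpos : 0 < rstar := hi₀ ▸ hrpos i₀
  have hrstarle1 : rstar ≤ 1 := by
    rw [← hrsum, ← hi₀]
    exact Finset.single_le_sum (fun i _ => hrnn i) (Finset.mem_univ i₀)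
  have hL : 0 ≤ L := (abs_nonneg (u 0)).trans (hu 0)
  -- spectral gap: one-step contraction for mean-zero vectors
  have hQnn : ∀ f : Fin n → ℝ, 0 ≤ ∑ i, r i * f i ^ 2 := fun f =>
    Finset.sum_nonneg fun i _ => mul_nonneg (hrnn i) (sq_nonneg _)
  have hstep : ∀ f : Fin n → ℝ, (∑ i, r i * f i) = 0 →
      ∑ i, r i * (M.mulVec f i) ^ 2 ≤ (1 - lam) * ∑ i, r i * f i ^ 2 := by
    intro f hmean
    by_cases hf : f = 0
    · subst hf
      simp [Matrix.mulVec_zero]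
    · have hQpos : 0 < ∑ i, r i * f i ^ 2 := by
        obtain ⟨i, hi⟩ := Function.ne_iff.mp hf
        apply Finset.sum_pos' (fun j _ => mul_nonneg (hrnn j) (sq_nonneg _))
        exact ⟨i, Finset.mem_univ i, mul_pos (hrpos i) (pow_pos (abs_pos.mpr hi) 2 |>.trans_eq (by rw [sq_abs]))⟩
      set S : Set ℝ := {c : ℝ | ∃ f : Fin n → ℝ, f ≠ 0 ∧ (∑ i, r i * f i) = 0 ∧
        c = ((∑ i, r i * (f i) ^ 2) - ∑ i, r i * ((M.mulVec f) i) ^ 2)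
              / (∑ i, r i * (f i) ^ 2)} with hS
      have hbdd : BddBelow S := by
        refine ⟨0, fun c hc => ?_⟩
        obtain ⟨g, hg0, hgm, hgc⟩ := hc
        rw [hgc]
        apply div_nonneg _ (hQnn g)
        have := aux_contract M r hMnn hMrow hrev hrnn g
        linarith
      have hmem : ((∑ i, r i * (f i) ^ 2) - ∑ i, r i * ((M.mulVec f) i) ^ 2)
            / (∑ i, r i * (f i) ^ 2) ∈ S := ⟨f, hf, hmean, rfl⟩
      have hle : lam ≤ ((∑ i, r i * (f i) ^ 2) - ∑ i, r i * ((M.mulVec f) i) ^ 2)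
            / (∑ i, r i * (f i) ^ 2) := hlam ▸ csInf_le hbdd hmem
      rw [le_div_iff₀ hQpos] at hle
      nlinarith
  -- iterate: j-step contraction
  have hmeanpow : ∀ (j : ℕ) (f : Fin n → ℝ), (∑ i, r i * f i) = 0 →
      (∑ i, r i * (M ^ j).mulVec f i) = 0 := by
    intro j
    induction j with
    | zero => intro f hf; simpa using hf
    | succ j ih =>
      intro f hf
      rw [pow_succ, ← Matrix.mulVec_mulVec]
      exact ih _ (by rw [aux_mean M r hMrow hrev f]; exact hf)
  have hiter : ∀ (j : ℕ) (f : Fin n → ℝ), (∑ i, r i * f i) = 0 →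
      ∑ i, r i * ((M ^ j).mulVec f i) ^ 2 ≤ (1 - lam) ^ j * ∑ i, r i * f i ^ 2 := by
    intro j
    induction j with
    | zero => intro f hf; simp
    | succ j ih =>
      intro f hf
      rw [pow_succ, ← Matrix.mulVec_mulVec]
      calc ∑ i, r i * ((M ^ j).mulVec (M.mulVec f) i) ^ 2
          ≤ (1 - lam) ^ j * ∑ i, r i * (M.mulVec f i) ^ 2 := by
            apply ih
            rw [aux_mean M r hMrow hrev f]; exact hf
        _ ≤ (1 - lam) ^ j * ((1 - lam) * ∑ i, r i * f i ^ 2) := by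
            apply mul_le_mul_of_nonneg_left (hstep f hf)
            have h1lam : (0:ℝ) ≤ 1 - lam := by linarith
            exact pow_nonneg h1lam j
        _ = (1 - lam) ^ (j + 1) * ∑ i, r i * f i ^ 2 := by ring
  -- the base vector f0
  set f0 : Fin n → ℝ := fun i => (Pi.single k (1 / r k) : Fin n → ℝ) i - 1 with hf0
  have hf0mean : (∑ i, r i * f0 i) = 0 := by
    simp only [hf0, mul_sub, Finset.sum_sub_distrib, mul_one, hrsum]
    rw [Finset.sum_eq_single k]
    · rw [Pi.single_eq_same, mul_one_div, div_self (hrpos k).ne', sub_self]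
    · intro i _ hik; rw [Pi.single_eq_of_ne hik, mul_zero]
    · intro h; exact absurd (Finset.mem_univ k) h
  have hf0Q : (∑ i, r i * f0 i ^ 2) = 1 / r k - 1 := by
    have : ∀ i, r i * f0 i ^ 2 =
        r i * ((Pi.single k (1 / r k) : Fin n → ℝ) i) ^ 2 - 2 * (r i * (Pi.single k (1 / r k) : Fin n → ℝ) i) + r i := by
      intro i; simp only [hf0]; ring
    simp only [this, Finset.sum_add_distrib, Finset.sum_sub_distrib, hrsum, ← Finset.mul_sum]
    rw [Finset.sum_eq_single k, Finset.sum_eq_single k]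
    · have hrk : r k ≠ 0 := (hrpos k).ne'
      rw [Pi.single_eq_same]
      field_simp
      ring
    · intro i _ hik; rw [Pi.single_eq_of_ne hik, mul_zero]
    · intro h; exact absurd (Finset.mem_univ k) h
    · intro i _ hik; rw [Pi.single_eq_of_ne hik]; ring
    · intro h; exact absurd (Finset.mem_univ k) h
  -- M^j preserves constant 1
  have hM1 : M.mulVec (fun _ => (1:ℝ)) = fun _ => (1:ℝ) := by
    funext i
    simp only [Matrix.mulVec, dotProduct, mul_one]
    exact hMrow i
  have hpow1 : ∀ j : ℕ, (M ^ j).mulVec (fun _ => (1:ℝ)) = fun _ => (1:ℝ) := by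
    intro j
    induction j with
    | zero => rw [pow_zero, Matrix.one_mulVec]
    | succ j ih => rw [pow_succ, ← Matrix.mulVec_mulVec, hM1, ih]
  -- setup
  set rho := Real.sqrt (1 - lam) with hrho
  have h1lamnn : (0:ℝ) ≤ 1 - lam := by linarith
  have hrhonn : 0 ≤ rho := Real.sqrt_nonneg _
  have hrhosq : rho ^ 2 = 1 - lam := Real.sq_sqrt h1lamnn
  have hrholt1 : rho < 1 := by nlinarith
  have hrhopos : 0 < 1 - rho := by linarith
  -- the vectors w j in Euclidean space
  set w : ℕ → EuclideanSpace ℝ (Fin n) := fun j => WithLp.toLp 2 ((M ^ j).mulVec f0) with hw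
  have hwnorm : ∀ j, ‖w j‖ ≤ rho ^ j / rstar := by
    intro j
    have hsq : ∑ i, (w j i) ^ 2 ≤ (1 - lam) ^ j / rstar ^ 2 := by
      have h1 : rstar * ∑ i, (w j i) ^ 2 ≤ ∑ i, r i * (w j i) ^ 2 := by
        rw [Finset.mul_sum]
        apply Finset.sum_le_sum
        intro i _
        exact mul_le_mul_of_nonneg_right (hrle (Set.mem_range_self i)) (sq_nonneg _)
      have h2 : ∑ i, r i * (w j i) ^ 2 ≤ (1 - lam) ^ j * (1 / r k - 1) := by
        have := hiter j f0 hf0mean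
        rw [hf0Q] at this
        exact this
      have h3 : (1:ℝ) / r k - 1 ≤ 1 / rstar := by
        have hk : rstar ≤ r k := hrle (Set.mem_range_self k)
        have h4 : (1:ℝ) / r k ≤ 1 / rstar :=
          one_div_le_one_div_of_le hrstarpos hk
        linarith
      have h4 : rstar * ∑ i, (w j i) ^ 2 ≤ (1 - lam) ^ j * (1 / rstar) := by
        calc rstar * ∑ i, (w j i) ^ 2 ≤ ∑ i, r i * (w j i) ^ 2 := h1
          _ ≤ (1 - lam) ^ j * (1 / r k - 1) := h2
          _ ≤ (1 - lam) ^ j * (1 / rstar) :=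
              mul_le_mul_of_nonneg_left h3 (pow_nonneg h1lamnn j)
      rw [le_div_iff₀ (by positivity : (0:ℝ) < rstar ^ 2)]
      calc (∑ i, (w j i) ^ 2) * rstar ^ 2
          = rstar * (∑ i, (w j i) ^ 2) * rstar := by ring
        _ ≤ ((1 - lam) ^ j * (1 / rstar)) * rstar :=
            mul_le_mul_of_nonneg_right h4 hrstarpos.le
        _ = (1 - lam) ^ j := by field_simp
    have hnormeq : ‖w j‖ = Real.sqrt (∑ i, (w j i) ^ 2) := by
      rw [EuclideanSpace.norm_eq]
      congr 1
      apply Finset.sum_congr rfl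
      intro i _
      rw [Real.norm_eq_abs, sq_abs]
    rw [hnormeq]
    calc Real.sqrt (∑ i, (w j i) ^ 2) ≤ Real.sqrt ((1 - lam) ^ j / rstar ^ 2) :=
          Real.sqrt_le_sqrt hsq
      _ = rho ^ j / rstar := by
          have h5 : (1 - lam) ^ j = (rho ^ j) ^ 2 := by
            rw [← pow_mul, mul_comm, pow_mul, hrhosq]
          rw [Real.sqrt_div (by positivity), h5, Real.sqrt_sq (pow_nonneg hrhonn j),
            Real.sqrt_sq hrstarpos.le]
  -- decomposition of the error vector
  set d : EuclideanSpace ℝ (Fin n) := WithLp.toLp 2 (fun i => z t i - zbar t) with hd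
  have hdecomp : d = ∑ s ∈ Finset.range t, u s • w (t - s - 1) := by
    ext i
    have hsum : (∑ s ∈ Finset.range t, u s • w (t - s - 1)) i
        = ∑ s ∈ Finset.range t, u s * w (t - s - 1) i := by
      rw [WithLp.ofLp_sum, Finset.sum_apply]
      rfl
    rw [hsum]
    have hterm : ∀ s, (M ^ (t - s - 1)).mulVec (Pi.single k (u s)) i
        = u s * (M ^ (t - s - 1)).mulVec (Pi.single k (1:ℝ)) i := by
      intro s
      have hsingle : (Pi.single k (u s) : Fin n → ℝ)
          = u s • (Pi.single k (1:ℝ) : Fin n → ℝ) := by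
        funext m
        rcases eq_or_ne m k with h | h
        · subst h
          simp only [Pi.single_eq_same, Pi.smul_apply, smul_eq_mul, mul_one]
        · simp only [Pi.single_eq_of_ne h, Pi.smul_apply, smul_eq_mul, mul_zero]
      rw [hsingle, Matrix.mulVec_smul]
      rfl
    have hwval : ∀ j, w j i = (1 / r k) * ((M ^ j).mulVec (Pi.single k (1:ℝ) : Fin n → ℝ)) i - 1 := by
      intro j
      have : f0 = (fun i => (1 / r k) • (Pi.single k (1:ℝ) : Fin n → ℝ) i) - (fun _ => (1:ℝ)) := by
        funext i
        simp only [hf0, Pi.sub_apply, smul_eq_mul]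
        rcases eq_or_ne i k with h | h
        · subst h; rw [Pi.single_eq_same, Pi.single_eq_same]; ring
        · rw [Pi.single_eq_of_ne h, Pi.single_eq_of_ne h]; ring
      have hws : w j i = (M ^ j).mulVec f0 i := rfl
      rw [hws, this, Matrix.mulVec_sub, hpow1 j]
      have : (M ^ j).mulVec (fun i => (1 / r k) • (Pi.single k (1:ℝ) : Fin n → ℝ) i)
          = (1 / r k) • (M ^ j).mulVec (Pi.single k (1:ℝ) : Fin n → ℝ) := by
        rw [← Matrix.mulVec_smul]
        congr 1
      rw [Pi.sub_apply, this]
      simp [smul_eq_mul]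
    rw [hd]
    show z t i - zbar t = _
    rw [hz t i, hzbar t, Finset.mul_sum, ← Finset.sum_sub_distrib]
    apply Finset.sum_congr rfl
    intro s _
    rw [hterm s, hwval (t - s - 1)]
    ring
  -- norm of d via triangle inequality + geometric series
  have hsumgeom : ∑ s ∈ Finset.range t, rho ^ (t - s - 1) = ∑ j ∈ Finset.range t, rho ^ j := by
    rw [← Finset.sum_range_reflect]
    apply Finset.sum_congr rfl
    intro s hs
    have hst := Finset.mem_range.mp hs
    congr 1
    omega
  have hgeom : ∑ j ∈ Finset.range t, rho ^ j ≤ 1 / (1 - rho) := by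
    rw [geom_sum_eq (by linarith : rho ≠ 1)]
    have heq : (rho ^ t - 1) / (rho - 1) = (1 - rho ^ t) / (1 - rho) := by
      rw [div_eq_div_iff (by linarith) (by linarith)]
      ring
    rw [heq]
    rw [div_le_div_iff₀ hrhopos hrhopos]
    nlinarith [pow_nonneg hrhonn t]
  have hdnorm : ‖d‖ ≤ L / (rstar * (1 - rho)) := by
    rw [hdecomp]
    calc ‖∑ s ∈ Finset.range t, u s • w (t - s - 1)‖
        ≤ ∑ s ∈ Finset.range t, ‖u s • w (t - s - 1)‖ := norm_sum_le _ _
      _ = ∑ s ∈ Finset.range t, |u s| * ‖w (t - s - 1)‖ := by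
          apply Finset.sum_congr rfl
          intro s _
          rw [norm_smul, Real.norm_eq_abs]
      _ ≤ ∑ s ∈ Finset.range t, L * (rho ^ (t - s - 1) / rstar) := by
          apply Finset.sum_le_sum
          intro s _
          exact mul_le_mul (hu s) (hwnorm _) (norm_nonneg _) hL
      _ = (L / rstar) * ∑ s ∈ Finset.range t, rho ^ (t - s - 1) := by
          rw [Finset.mul_sum]
          apply Finset.sum_congr rfl
          intro s _
          ring
      _ ≤ (L / rstar) * (1 / (1 - rho)) := by
          apply mul_le_mul_of_nonneg_left _ (by positivity)
          rw [hsumgeom]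
          exact hgeom
      _ = L / (rstar * (1 - rho)) := by
          field_simp
  -- conclude
  have hfinal : ∑ i, (z t i - zbar t) ^ 2 = ‖d‖ ^ 2 := by
    rw [EuclideanSpace.norm_eq, Real.sq_sqrt (Finset.sum_nonneg fun i _ => sq_nonneg _)]
    apply Finset.sum_congr rfl
    intro i _
    rw [Real.norm_eq_abs, sq_abs]
  rw [hfinal]
  calc ‖d‖ ^ 2 ≤ (L / (rstar * (1 - rho))) ^ 2 :=
        pow_le_pow_left₀ (norm_nonneg _) hdnorm 2
    _ = L ^ 2 / (rstar ^ 2 * (1 - rho) ^ 2) := by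
        rw [div_pow, mul_pow]
    _ ≤ L ^ 2 / (rstar ^ 3 * (1 - rho) ^ 2) := by
        have hApos : (0:ℝ) < rstar ^ 2 * (1 - rho) ^ 2 :=
          mul_pos (by positivity) (pow_pos hrhopos 2)
        have hBpos : (0:ℝ) < rstar ^ 3 * (1 - rho) ^ 2 :=
          mul_pos (by positivity) (pow_pos hrhopos 2)
        rw [div_le_div_iff₀ hApos hBpos]
        have h6 : rstar ^ 3 ≤ rstar ^ 2 :=
          pow_le_pow_of_le_one hrstarpos.le hrstarle1 (by norm_num)
        exact mul_le_mul_of_nonneg_left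
          (mul_le_mul_of_nonneg_right h6 (sq_nonneg _)) (sq_nonneg L)
end

section
/- Under the hypotheses of the circulation-based algorithm with reversible pair (r,M), Lipschitz updates |uₖ(s)| ≤ L, and spectral gap λ > 0, the total squared disagreement satisfies Σᵢ₌₁ⁿ ‖zᵢ(t) − z̄(t)‖² ≤ nL² / (r*³(1 − √(1−λ))²) for all t ≥ 1, where z̄(t) = Σᵢ rᵢ zᵢ(t) and r* = minᵢ rᵢ. -/
set_option maxHeartbeats 1000000 in
theorem stmt_12 {n : ℕ} (M : Matrix (Fin n) (Fin n) ℝ) (r : Fin n → ℝ)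
    (hrpos : ∀ i, 0 < r i) (hrsum : ∑ i, r i = 1)
    (hMnn : ∀ i j, 0 ≤ M i j) (hMrow : ∀ i, ∑ j, M i j = 1)
    (hrev : ∀ i j, r i * M i j = r j * M j i)
    (lam : ℝ)
    (hlam : lam = sInf {c : ℝ | ∃ f : Fin n → ℝ, f ≠ 0 ∧ (∑ i, r i * f i) = 0 ∧
      c = ((∑ i, r i * (f i) ^ 2) - ∑ i, r i * ((M.mulVec f) i) ^ 2)
            / (∑ i, r i * (f i) ^ 2)})
    (hlampos : 0 < lam)
    (rstar : ℝ) (hrstar : IsLeast (Set.range r) rstar)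
    (u : ℕ → Fin n → ℝ) (L : ℝ) (hu : ∀ s k, |u s k| ≤ L)
    (zc : ℕ → Fin n → Fin n → ℝ)
    (hz0 : ∀ k i, zc 0 k i = 0)
    (hrec : ∀ t k, zc (t + 1) k =
      M.mulVec (zc t k) + Pi.single k ((1 / r k) * u t k))
    (zbar : ℕ → Fin n → ℝ)
    (hzbar : ∀ t k, zbar t k = ∑ i, r i * zc t k i)
    (t : ℕ) (ht : 1 ≤ t) :
    ∑ i, ∑ k, (zc t k i - zbar t k) ^ 2 ≤
      (n : ℝ) * L ^ 2 / (rstar ^ 3 * (1 - Real.sqrt (1 - lam)) ^ 2) := by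
  clear ht
  obtain ⟨⟨k0, hk0⟩, hlb'⟩ := hrstar
  have hrs_le : ∀ i, rstar ≤ r i := fun i => hlb' ⟨i, rfl⟩
  have hrs_pos : 0 < rstar := hk0 ▸ hrpos k0
  have hrs_le1 : rstar ≤ 1 := by
    rw [← hrsum]
    exact (hrs_le k0).trans
      (Finset.single_le_sum (fun i _ => (hrpos i).le) (Finset.mem_univ k0))
  have hL : 0 ≤ L := (abs_nonneg _).trans (hu 0 k0)
  have hQnn : ∀ f : Fin n → ℝ, 0 ≤ ∑ i, r i * f i ^ 2 := fun f =>
    Finset.sum_nonneg fun i _ => mul_nonneg (hrpos i).le (sq_nonneg _)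
  have hMcol : ∀ j, ∑ i, r i * M i j = r j := by
    intro j
    calc ∑ i, r i * M i j = ∑ i, r j * M j i := by simp_rw [hrev]
    _ = r j * ∑ i, M j i := by rw [Finset.mul_sum]
    _ = r j := by rw [hMrow j, mul_one]
  -- Jensen: (Mf)_i^2 ≤ ∑_j M_ij f_j^2
  have hJen : ∀ (f : Fin n → ℝ) i, (M.mulVec f i) ^ 2 ≤ ∑ j, M i j * f j ^ 2 := by
    intro f i
    have h := Finset.sum_mul_sq_le_sq_mul_sq Finset.univ
      (fun j => Real.sqrt (M i j)) (fun j => Real.sqrt (M i j) * f j)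
    have e1 : ∀ j, Real.sqrt (M i j) * (Real.sqrt (M i j) * f j) = M i j * f j := by
      intro j; rw [← mul_assoc, Real.mul_self_sqrt (hMnn i j)]
    have e3 : ∀ j, (Real.sqrt (M i j) * f j) ^ 2 = M i j * f j ^ 2 := by
      intro j; rw [mul_pow, Real.sq_sqrt (hMnn i j)]
    have e2 : ∀ j, (Real.sqrt (M i j)) ^ 2 = M i j := fun j => Real.sq_sqrt (hMnn i j)
    simp_rw [e1, e2, e3, hMrow i, one_mul] at h
    simpa [Matrix.mulVec, dotProduct] using h
  have hQM : ∀ f : Fin n → ℝ, ∑ i, r i * (M.mulVec f i) ^ 2 ≤ ∑ i, r i * f i ^ 2 := by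
    intro f
    calc ∑ i, r i * (M.mulVec f i) ^ 2 ≤ ∑ i, r i * ∑ j, M i j * f j ^ 2 :=
      Finset.sum_le_sum fun i _ => mul_le_mul_of_nonneg_left (hJen f i) (hrpos i).le
    _ = ∑ j, (∑ i, r i * M i j) * f j ^ 2 := by
        simp_rw [Finset.mul_sum]
        rw [Finset.sum_comm]
        simp_rw [Finset.sum_mul, mul_assoc]
    _ = ∑ i, r i * f i ^ 2 := by simp_rw [hMcol]
  -- spectral contraction
  have hcon : ∀ f : Fin n → ℝ, (∑ i, r i * f i) = 0 →
      ∑ i, r i * (M.mulVec f i) ^ 2 ≤ (1 - lam) * ∑ i, r i * f i ^ 2 := by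
    intro f hmz
    by_cases hf : f = 0
    · subst hf; simp [Matrix.mulVec_zero]
    · have hD : 0 < ∑ i, r i * f i ^ 2 := by
        obtain ⟨i, hi⟩ := Function.ne_iff.mp hf
        exact Finset.sum_pos' (fun j _ => mul_nonneg (hrpos j).le (sq_nonneg _))
          ⟨i, Finset.mem_univ i, mul_pos (hrpos i) (pow_pos (abs_pos.mpr hi) 2 |> fun h => by rwa [sq_abs] at h)⟩
      have hbdd : BddBelow {c : ℝ | ∃ f : Fin n → ℝ, f ≠ 0 ∧ (∑ i, r i * f i) = 0 ∧
          c = ((∑ i, r i * (f i) ^ 2) - ∑ i, r i * ((M.mulVec f) i) ^ 2)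
            / (∑ i, r i * (f i) ^ 2)} := by
        refine ⟨0, fun c hc => ?_⟩
        obtain ⟨g, hg0, hgz, hcg⟩ := hc
        rw [hcg]
        exact div_nonneg (sub_nonneg.mpr (hQM g)) (hQnn g)
      have hmem : ((∑ i, r i * (f i) ^ 2) - ∑ i, r i * ((M.mulVec f) i) ^ 2)
            / (∑ i, r i * (f i) ^ 2) ∈ {c : ℝ | ∃ f : Fin n → ℝ, f ≠ 0 ∧
            (∑ i, r i * f i) = 0 ∧
            c = ((∑ i, r i * (f i) ^ 2) - ∑ i, r i * ((M.mulVec f) i) ^ 2)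
              / (∑ i, r i * (f i) ^ 2)} := ⟨f, hf, hmz, rfl⟩
      have hle := csInf_le hbdd hmem
      rw [← hlam] at hle
      have h2 := (le_div_iff₀ hD).mp hle
      nlinarith
  -- Cauchy-Schwarz for the weighted bilinear form
  have hCS : ∀ a b : Fin n → ℝ, ∑ i, r i * (a i * b i) ≤
      Real.sqrt (∑ i, r i * a i ^ 2) * Real.sqrt (∑ i, r i * b i ^ 2) := by
    intro a b
    have h := Finset.sum_mul_sq_le_sq_mul_sq Finset.univ
      (fun i => Real.sqrt (r i) * a i) (fun i => Real.sqrt (r i) * b i)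
    have e1 : ∀ i, (Real.sqrt (r i) * a i) * (Real.sqrt (r i) * b i) = r i * (a i * b i) := by
      intro i; rw [mul_mul_mul_comm, Real.mul_self_sqrt (hrpos i).le]
    have e2 : ∀ i, (Real.sqrt (r i) * a i) ^ 2 = r i * a i ^ 2 := by
      intro i; rw [mul_pow, Real.sq_sqrt (hrpos i).le]
    have e3 : ∀ i, (Real.sqrt (r i) * b i) ^ 2 = r i * b i ^ 2 := by
      intro i; rw [mul_pow, Real.sq_sqrt (hrpos i).le]
    simp_rw [e1, e2, e3] at h
    calc ∑ i, r i * (a i * b i) ≤ |∑ i, r i * (a i * b i)| := le_abs_self _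
    _ = Real.sqrt ((∑ i, r i * (a i * b i)) ^ 2) := (Real.sqrt_sq_eq_abs _).symm
    _ ≤ Real.sqrt ((∑ i, r i * a i ^ 2) * ∑ i, r i * b i ^ 2) := Real.sqrt_le_sqrt h
    _ = _ := Real.sqrt_mul (hQnn a) _
  -- triangle inequality for the weighted norm
  have htri : ∀ a b : Fin n → ℝ, Real.sqrt (∑ i, r i * (a i + b i) ^ 2) ≤
      Real.sqrt (∑ i, r i * a i ^ 2) + Real.sqrt (∑ i, r i * b i ^ 2) := by
    intro a b
    have hexp : ∑ i, r i * (a i + b i) ^ 2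
        = (∑ i, r i * a i ^ 2) + 2 * (∑ i, r i * (a i * b i)) + ∑ i, r i * b i ^ 2 := by
      simp only [Finset.mul_sum, ← Finset.sum_add_distrib]
      exact Finset.sum_congr rfl fun i _ => by ring
    have h1 : ∑ i, r i * (a i + b i) ^ 2 ≤
        (Real.sqrt (∑ i, r i * a i ^ 2) + Real.sqrt (∑ i, r i * b i ^ 2)) ^ 2 := by
      rw [hexp, add_sq, Real.sq_sqrt (hQnn a), Real.sq_sqrt (hQnn b)]
      nlinarith [hCS a b]
    calc Real.sqrt (∑ i, r i * (a i + b i) ^ 2)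
        ≤ Real.sqrt ((Real.sqrt (∑ i, r i * a i ^ 2) + Real.sqrt (∑ i, r i * b i ^ 2)) ^ 2) :=
          Real.sqrt_le_sqrt h1
    _ = _ := Real.sqrt_sq (by positivity)
  set th := Real.sqrt (1 - lam) with hth
  have hth0 : 0 ≤ th := Real.sqrt_nonneg _
  have hth1 : th < 1 := by
    rcases le_or_gt (1 - lam) 0 with h | h
    · rw [hth, Real.sqrt_eq_zero'.mpr h]; norm_num
    · calc th = Real.sqrt (1 - lam) := hth
      _ < Real.sqrt 1 := Real.sqrt_lt_sqrt h.le (by linarith)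
      _ = 1 := Real.sqrt_one
  have h1th : 0 < 1 - th := by linarith
  -- contraction in sqrt form
  have hconS : ∀ f : Fin n → ℝ, (∑ i, r i * f i) = 0 →
      Real.sqrt (∑ i, r i * (M.mulVec f i) ^ 2) ≤ th * Real.sqrt (∑ i, r i * f i ^ 2) := by
    intro f hmz
    have h := hcon f hmz
    rcases le_or_gt 0 (1 - lam) with hc | hc
    · calc Real.sqrt (∑ i, r i * (M.mulVec f i) ^ 2)
          ≤ Real.sqrt ((1 - lam) * ∑ i, r i * f i ^ 2) := Real.sqrt_le_sqrt h
      _ = th * Real.sqrt (∑ i, r i * f i ^ 2) := Real.sqrt_mul hc _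
    · have h0 : ∑ i, r i * (M.mulVec f i) ^ 2 = 0 := by
        refine le_antisymm (h.trans ?_) (hQnn _)
        nlinarith [hQnn f]
      rw [h0, Real.sqrt_zero]
      positivity
  -- weighted mean is preserved by M and basic single-sums
  have hmean : ∀ g : Fin n → ℝ, ∑ i, r i * M.mulVec g i = ∑ i, r i * g i := by
    intro g
    simp only [Matrix.mulVec, dotProduct, Finset.mul_sum]
    rw [Finset.sum_comm]
    simp_rw [← mul_assoc, ← Finset.sum_mul, hMcol]
  have hsingle : ∀ (k : Fin n) (c : ℝ), ∑ i, r i * (Pi.single k c : Fin n → ℝ) i = r k * c := by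
    intro k c
    rw [Finset.sum_eq_single k]
    · simp
    · intro i _ hik; simp [Pi.single_eq_of_ne hik]
    · simp
  have hsingle2 : ∀ (k : Fin n) (c : ℝ), ∑ i, r i * ((Pi.single k c : Fin n → ℝ) i) ^ 2 = r k * c ^ 2 := by
    intro k c
    rw [Finset.sum_eq_single k]
    · simp
    · intro i _ hik; simp [Pi.single_eq_of_ne hik]
    · simp
  -- recursion for the mean
  have hzbar_rec : ∀ t k, zbar (t + 1) k = zbar t k + u t k := by
    intro t k
    rw [hzbar, hrec]
    simp only [Pi.add_apply, mul_add]
    rw [Finset.sum_add_distrib, hmean, hsingle, ← hzbar]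
    rw [← mul_assoc, mul_one_div_cancel (hrpos k).ne', one_mul]
  -- mean-zero of the disagreement vector
  have hmz : ∀ t k, ∑ i, r i * (zc t k i - zbar t k) = 0 := by
    intro t k
    simp_rw [mul_sub]
    rw [Finset.sum_sub_distrib, ← Finset.sum_mul, hrsum, one_mul, hzbar, sub_self]
  -- key uniform bound on weighted norm of disagreement
  have key : ∀ (k : Fin n) (t : ℕ),
      Real.sqrt (∑ i, r i * (zc t k i - zbar t k) ^ 2) ≤
        (L * Real.sqrt (1 / rstar)) / (1 - th) := by
    intro k
    have hQv : ∑ i, r i * ((Pi.single k (1 / r k) : Fin n → ℝ) i - 1) ^ 2 ≤ 1 / rstar := by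
      have hexp : ∑ i, r i * ((Pi.single k (1 / r k) : Fin n → ℝ) i - 1) ^ 2
          = (∑ i, r i * ((Pi.single k (1 / r k) : Fin n → ℝ) i) ^ 2)
            - 2 * (∑ i, r i * (Pi.single k (1 / r k) : Fin n → ℝ) i) + ∑ i, r i := by
        simp only [Finset.mul_sum, ← Finset.sum_add_distrib, ← Finset.sum_sub_distrib]
        exact Finset.sum_congr rfl fun i _ => by ring
      rw [hexp, hsingle, hsingle2, hrsum]
      have h1 : r k * (1 / r k) ^ 2 = 1 / r k := by
        field_simp
      have h2 : r k * (1 / r k) = 1 := mul_one_div_cancel (hrpos k).ne'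
      have h3 : 1 / r k ≤ 1 / rstar := one_div_le_one_div_of_le hrs_pos (hrs_le k)
      rw [h1, h2]
      linarith
    have hvb : Real.sqrt (∑ i, r i * ((Pi.single k (1 / r k) : Fin n → ℝ) i - 1) ^ 2) ≤
        Real.sqrt (1 / rstar) := Real.sqrt_le_sqrt hQv
    intro t
    induction t with
    | zero =>
      have h0 : ∀ i, zc 0 k i - zbar 0 k = 0 := by
        intro i
        rw [hz0, hzbar]
        simp [hz0]
      simp only [h0]
      simp only [ne_eq, OfNat.ofNat_ne_zero, not_false_eq_true, zero_pow, mul_zero,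
        Finset.sum_const_zero, Real.sqrt_zero]
      positivity
    | succ t ih =>
      have hpt : ∀ i, zc (t + 1) k i - zbar (t + 1) k =
          M.mulVec (fun j => zc t k j - zbar t k) i
            + u t k * ((Pi.single k (1 / r k) : Fin n → ℝ) i - 1) := by
        intro i
        have h1 : zc (t + 1) k i = M.mulVec (zc t k) i
            + (Pi.single k ((1 / r k) * u t k) : Fin n → ℝ) i := by
          have := congrFun (hrec t k) i
          simpa using this
        have h2 : M.mulVec (fun j => zc t k j - zbar t k) i
            = M.mulVec (zc t k) i - zbar t k := by
          simp only [Matrix.mulVec, dotProduct, mul_sub]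
          rw [Finset.sum_sub_distrib, ← Finset.sum_mul, hMrow i, one_mul]
        have h3 : (Pi.single k ((1 / r k) * u t k) : Fin n → ℝ) i
            = u t k * (Pi.single k (1 / r k) : Fin n → ℝ) i := by
          rcases eq_or_ne i k with h | h
          · subst h; simp [mul_comm]
          · simp [Pi.single_eq_of_ne h]
        rw [h1, hzbar_rec, h2, h3]
        ring
      simp_rw [hpt]
      calc Real.sqrt (∑ i, r i * (M.mulVec (fun j => zc t k j - zbar t k) i
            + u t k * ((Pi.single k (1 / r k) : Fin n → ℝ) i - 1)) ^ 2)
          ≤ Real.sqrt (∑ i, r i * (M.mulVec (fun j => zc t k j - zbar t k) i) ^ 2)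
            + Real.sqrt (∑ i, r i * (u t k * ((Pi.single k (1 / r k) : Fin n → ℝ) i - 1)) ^ 2) :=
            htri _ _
      _ ≤ th * Real.sqrt (∑ i, r i * (zc t k i - zbar t k) ^ 2)
            + |u t k| * Real.sqrt (∑ i, r i * ((Pi.single k (1 / r k) : Fin n → ℝ) i - 1) ^ 2) := by
            refine add_le_add (hconS _ (hmz t k)) (le_of_eq ?_)
            have he : ∑ i, r i * (u t k * ((Pi.single k (1 / r k) : Fin n → ℝ) i - 1)) ^ 2
                = (u t k) ^ 2 * ∑ i, r i * ((Pi.single k (1 / r k) : Fin n → ℝ) i - 1) ^ 2 := by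
              rw [Finset.mul_sum]
              exact Finset.sum_congr rfl fun i _ => by ring
            rw [he, Real.sqrt_mul (sq_nonneg _), Real.sqrt_sq_eq_abs]
      _ ≤ th * ((L * Real.sqrt (1 / rstar)) / (1 - th)) + L * Real.sqrt (1 / rstar) := by
            refine add_le_add (mul_le_mul_of_nonneg_left ih hth0) ?_
            exact mul_le_mul (hu t k) hvb (Real.sqrt_nonneg _) hL
      _ = (L * Real.sqrt (1 / rstar)) / (1 - th) := by field_simp; ring
  -- per-coordinate squared bound
  have hfin : ∀ (k : Fin n) (t : ℕ),
      ∑ i, (zc t k i - zbar t k) ^ 2 ≤ L ^ 2 / (rstar ^ 2 * (1 - th) ^ 2) := by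
    intro k t
    have h1 := key k t
    have hQle : ∑ i, r i * (zc t k i - zbar t k) ^ 2 ≤
        ((L * Real.sqrt (1 / rstar)) / (1 - th)) ^ 2 := by
      have hs := Real.sq_sqrt (hQnn (fun i => zc t k i - zbar t k))
      nlinarith [Real.sqrt_nonneg (∑ i, r i * (zc t k i - zbar t k) ^ 2)]
    have h2 : ∑ i, (zc t k i - zbar t k) ^ 2 ≤
        (1 / rstar) * ∑ i, r i * (zc t k i - zbar t k) ^ 2 := by
      rw [Finset.mul_sum]
      refine Finset.sum_le_sum fun i _ => ?_
      have hx := sq_nonneg (zc t k i - zbar t k)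
      have hri := hrs_le i
      have hinv : (1 / rstar) * rstar = 1 := by field_simp
      nlinarith [mul_le_mul_of_nonneg_left
        (mul_le_mul_of_nonneg_right hri hx) (by positivity : (0:ℝ) ≤ 1 / rstar)]
    have hsq : (L * Real.sqrt (1 / rstar)) ^ 2 = L ^ 2 * (1 / rstar) := by
      rw [mul_pow, Real.sq_sqrt (by positivity)]
    calc ∑ i, (zc t k i - zbar t k) ^ 2
        ≤ (1 / rstar) * ∑ i, r i * (zc t k i - zbar t k) ^ 2 := h2
    _ ≤ (1 / rstar) * ((L * Real.sqrt (1 / rstar)) / (1 - th)) ^ 2 :=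
        mul_le_mul_of_nonneg_left hQle (by positivity)
    _ = L ^ 2 / (rstar ^ 2 * (1 - th) ^ 2) := by
        have hr0 : rstar ≠ 0 := hrs_pos.ne'
        have ht0 : (1 - th) ≠ 0 := h1th.ne'
        rw [div_pow, hsq]
        field_simp
  rw [Finset.sum_comm]
  calc ∑ k, ∑ i, (zc t k i - zbar t k) ^ 2
      ≤ ∑ _k : Fin n, L ^ 2 / (rstar ^ 2 * (1 - th) ^ 2) :=
        Finset.sum_le_sum fun k _ => hfin k t
  _ = (n : ℝ) * (L ^ 2 / (rstar ^ 2 * (1 - th) ^ 2)) := by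
        rw [Finset.sum_const, Finset.card_univ, Fintype.card_fin, nsmul_eq_mul]
  _ ≤ (n : ℝ) * L ^ 2 / (rstar ^ 3 * (1 - th) ^ 2) := by
        rw [mul_div_assoc]
        refine mul_le_mul_of_nonneg_left ?_ (Nat.cast_nonneg n)
        apply div_le_div_of_nonneg_left (by positivity) (by positivity)
        have : rstar ^ 3 ≤ rstar ^ 2 := pow_le_pow_of_le_one hrs_pos.le hrs_le1 (by norm_num)
        nlinarith [sq_nonneg (1 - th)]
end
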